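/- For every constant p ∈ (0,1), the equation γ·ln(2/γ) + (2−γ)·ln(2/(2−γ)) = (2−γ)·ln(1/(1−p)) − (1−γ)·ln(1/p) has a unique solution γ in the open interval (max{1, 2p}, 2). -/

import Mathlib

open Real Set

/-- For every constant `p ∈ (0,1)`, the equation
`γ ln(2/γ) + (2-γ) ln(2/(2-γ)) = (2-γ) ln(1/(1-p)) - (1-γ) ln(1/p)`
has a unique solution `γ` in the open interval `(max{1, 2p}, 2)`. -/
theorem stmt3 (p : ℝ) (hp0 : 0 < p) (hp1 : p < 1) :
    ∃! γ : ℝ, γ ∈ Set.Ioo (max 1 (2 * p)) 2 ∧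
      γ * Real.log (2 / γ) + (2 - γ) * Real.log (2 / (2 - γ)) =
        (2 - γ) * Real.log (1 / (1 - p)) - (1 - γ) * Real.log (1 / p) := by
  set a : ℝ := max 1 (2 * p) with ha
  have ha1 : (1:ℝ) ≤ a := le_max_left _ _
  have ha2p : 2 * p ≤ a := le_max_right _ _
  have ha2 : a < 2 := max_lt one_lt_two (by linarith)
  have hp1' : (0:ℝ) < 1 - p := by linarith
  set F : ℝ → ℝ := fun γ => 2 * Real.log 2 - γ * Real.log γ - (2 - γ) * Real.log (2 - γ)
      + (2 - γ) * Real.log (1 - p) - (1 - γ) * Real.log p with hF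
  -- equivalence between the equation and F γ = 0, on Ioo a 2
  have heq : ∀ γ ∈ Ioo a 2, ((γ * Real.log (2 / γ) + (2 - γ) * Real.log (2 / (2 - γ)) =
        (2 - γ) * Real.log (1 / (1 - p)) - (1 - γ) * Real.log (1 / p)) ↔ F γ = 0) := by
    intro γ hγ
    have h0 : (0:ℝ) < γ := lt_of_lt_of_le one_pos (le_of_lt (lt_of_le_of_lt ha1 hγ.1))
    have h2 : γ < 2 := hγ.2
    have hkey : F γ = (γ * Real.log (2 / γ) + (2 - γ) * Real.log (2 / (2 - γ)))
        - ((2 - γ) * Real.log (1 / (1 - p)) - (1 - γ) * Real.log (1 / p)) := by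
      rw [Real.log_div two_ne_zero (ne_of_gt h0),
        Real.log_div two_ne_zero (by linarith : (2:ℝ) - γ ≠ 0),
        one_div, one_div, Real.log_inv, Real.log_inv, hF]
      ring
    constructor
    · intro h; rw [hkey, h]; ring
    · intro h; rw [hkey] at h; linarith
  -- continuity of F
  have hc : Continuous F := by
    have h1 : Continuous fun x : ℝ => x * Real.log x := Real.continuous_mul_log
    exact (((continuous_const.sub h1).sub
        (h1.comp (continuous_const.sub continuous_id))).add
        ((continuous_const.sub continuous_id).mul continuous_const)).sub
        ((continuous_const.sub continuous_id).mul continuous_const)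
  -- F is strictly decreasing on Icc a 2
  have hanti : StrictAntiOn F (Icc a 2) := by
    apply strictAntiOn_of_deriv_neg (convex_Icc a 2) hc.continuousOn
    intro x hx
    rw [interior_Icc] at hx
    have h0 : (0:ℝ) < x := lt_of_lt_of_le one_pos (le_of_lt (lt_of_le_of_lt ha1 hx.1))
    have h2 : x < 2 := hx.2
    have h2p : 2 * p < x := lt_of_le_of_lt ha2p hx.1
    have hd : HasDerivAt F (Real.log (2 - x) - Real.log x + Real.log p - Real.log (1 - p)) x := by
      have d1 : HasDerivAt (fun y : ℝ => y * Real.log y) (Real.log x + 1) x :=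
        Real.hasDerivAt_mul_log (ne_of_gt h0)
      have dinner : HasDerivAt (fun y : ℝ => 2 - y) (-1) x := by
        simpa using (hasDerivAt_id x).const_sub 2
      have d2 : HasDerivAt (fun y : ℝ => (2 - y) * Real.log (2 - y))
          ((Real.log (2 - x) + 1) * (-1)) x :=
        (Real.hasDerivAt_mul_log (by linarith : (2:ℝ) - x ≠ 0)).comp x dinner
      have d3 : HasDerivAt (fun y : ℝ => (2 - y) * Real.log (1 - p)) (-Real.log (1 - p)) x := by
        simpa using dinner.mul_const (Real.log (1 - p))
      have d4 : HasDerivAt (fun y : ℝ => (1 - y) * Real.log p) (-Real.log p) x := by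
        have : HasDerivAt (fun y : ℝ => 1 - y) (-1) x := by
          simpa using (hasDerivAt_id x).const_sub 1
        simpa using this.mul_const (Real.log p)
      have := (((hasDerivAt_const x (2 * Real.log 2)).sub d1).sub d2).add d3 |>.sub d4
      convert this using 1
      exacts [rfl, rfl, rfl, by ring]
    rw [hd.deriv]
    have hprod : Real.log ((2 - x) * p) < Real.log (x * (1 - p)) :=
      Real.log_lt_log (mul_pos (by linarith) hp0) (by nlinarith)
    rw [Real.log_mul (by linarith) (ne_of_gt hp0),
        Real.log_mul (ne_of_gt h0) (ne_of_gt hp1')] at hprod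
    linarith
  -- endpoint values
  have hFa : 0 < F a := by
    rcases le_total (2 * p) 1 with h | h
    · have haeq : a = 1 := max_eq_left h
      have hhalf : Real.log (1 / 2) ≤ Real.log (1 - p) :=
        Real.log_le_log (by norm_num) (by linarith)
      rw [one_div, Real.log_inv] at hhalf
      have l2 : (0:ℝ) < Real.log 2 := Real.log_pos one_lt_two
      have hF1 : F 1 = 2 * Real.log 2 + Real.log (1 - p) := by rw [hF]; norm_num
      rw [haeq, hF1]; linarith
    · have haeq : a = 2 * p := max_eq_right h
      have l1 : Real.log (2 * p) = Real.log 2 + Real.log p :=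
        Real.log_mul two_ne_zero (ne_of_gt hp0)
      have l2 : Real.log (2 - 2 * p) = Real.log 2 + Real.log (1 - p) := by
        rw [show (2 - 2 * p : ℝ) = 2 * (1 - p) by ring,
          Real.log_mul two_ne_zero (ne_of_gt hp1')]
      have : F (2 * p) = -Real.log p := by rw [hF]; simp only; rw [l1, l2]; ring
      rw [haeq, this]
      have := Real.log_neg hp0 hp1
      linarith
  have hF2 : F 2 < 0 := by
    have : F 2 = Real.log p := by rw [hF]; simp only; norm_num
    rw [this]; exact Real.log_neg hp0 hp1
  -- IVT gives a root
  have hsub : (0:ℝ) ∈ F '' Icc a 2 := by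
    apply intermediate_value_Icc' (le_of_lt ha2) hc.continuousOn
    exact ⟨le_of_lt hF2, le_of_lt hFa⟩
  obtain ⟨c, hcmem, hc0⟩ := hsub
  have hcne1 : c ≠ a := fun h => by rw [h] at hc0; linarith
  have hcne2 : c ≠ 2 := fun h => by rw [h] at hc0; linarith
  have hcIoo : c ∈ Ioo a 2 := ⟨lt_of_le_of_ne hcmem.1 (Ne.symm hcne1), lt_of_le_of_ne hcmem.2 hcne2⟩
  refine ⟨c, ⟨hcIoo, (heq c hcIoo).mpr hc0⟩, ?_⟩
  rintro γ ⟨hγIoo, hγeq⟩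
  exact hanti.injOn (Ioo_subset_Icc_self hγIoo) hcmem
    (by rw [(heq _ hγIoo).mp hγeq, hc0])
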